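/- arXiv:2510.07855 — 7 statements merged into one kernel-verified Lean document; each statement's English description precedes it below -/
import Mathlib

section
/- Every invertible matrix in the max-plus algebra M_n(ℝ₊) (with max as addition and usual multiplication, identity matrix I) is a generalized permutation matrix, i.e., a product of a diagonal matrix with positive diagonal entries and a permutation matrix. -/
open Matrix Finset

noncomputable section

/-- Max-plus matrix product: `(A ⊗ B) i j = max_k (A i k * B k j)`. -/
def mMul {n : ℕ} (A B : Matrix (Fin n) (Fin n) NNReal) : Matrix (Fin n) (Fin n) NNReal :=
  fun i j => Finset.univ.sup fun k => A i k * B k j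

/-- Entrywise maximum of matrices. -/
def msup {n : ℕ} (A B : Matrix (Fin n) (Fin n) NNReal) : Matrix (Fin n) (Fin n) NNReal :=
  fun i j => max (A i j) (B i j)

/-- Max-plus powers. -/
def mPow {n : ℕ} (A : Matrix (Fin n) (Fin n) NNReal) : ℕ → Matrix (Fin n) (Fin n) NNReal
  | 0 => 1
  | k + 1 => mMul A (mPow A k)

/-- Conjugation by the permutation matrix of `σ` : `(P⁻¹AP) i j = A (σ i) (σ j)`. -/
def conjP {n : ℕ} (σ : Equiv.Perm (Fin n)) (A : Matrix (Fin n) (Fin n) NNReal) :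
    Matrix (Fin n) (Fin n) NNReal := fun i j => A (σ i) (σ j)

/-- Upper triangular. -/
def UpperTri {n : ℕ} (M : Matrix (Fin n) (Fin n) NNReal) : Prop :=
  ∀ i j : Fin n, j < i → M i j = 0

/-- Edge relation of the digraph `G_A`. -/
def Edge {n : ℕ} (A : Matrix (Fin n) (Fin n) NNReal) (i j : Fin n) : Prop := 0 < A i j

/-- `G_A` has no directed cycle passing through at least two distinct vertices. -/
def NoMultiVertexCycle {n : ℕ} (A : Matrix (Fin n) (Fin n) NNReal) : Prop :=
  ∀ i j : Fin n, i ≠ j →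
    ¬(Relation.TransGen (Edge A) i j ∧ Relation.TransGen (Edge A) j i)

/-- Triangularizable via a permutation matrix. -/
def Triangularizable {n : ℕ} (A : Matrix (Fin n) (Fin n) NNReal) : Prop :=
  ∃ σ : Equiv.Perm (Fin n), UpperTri (conjP σ A)

/-- Simultaneously triangularizable via one permutation matrix. -/
def SimTriangularizable {n : ℕ} (A B : Matrix (Fin n) (Fin n) NNReal) : Prop :=
  ∃ σ : Equiv.Perm (Fin n), UpperTri (conjP σ A) ∧ UpperTri (conjP σ B)

/-- Max-plus nilpotency. -/
def MNilpotent {n : ℕ} (A : Matrix (Fin n) (Fin n) NNReal) : Prop :=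
  ∃ k : ℕ, mPow A k = 0

/-- Tropical determinant. -/
def tdet {n : ℕ} (M : Matrix (Fin n) (Fin n) NNReal) : NNReal :=
  Finset.univ.sup fun σ : Equiv.Perm (Fin n) => ∏ i, M i (σ i)

/-- The matrix `M(z) = I ⊕ z₁A ⊕ z₂B`. -/
def Mz {n : ℕ} (A B : Matrix (Fin n) (Fin n) NNReal) (z₁ z₂ : NNReal) :
    Matrix (Fin n) (Fin n) NNReal :=
  fun i j => max (max ((1 : Matrix (Fin n) (Fin n) NNReal) i j) (z₁ * A i j)) (z₂ * B i j)

theorem stmt0 {n : ℕ} (A : Matrix (Fin n) (Fin n) NNReal)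
    (hinv : ∃ B : Matrix (Fin n) (Fin n) NNReal, mMul A B = 1 ∧ mMul B A = 1) :
    ∃ (d : Fin n → NNReal) (σ : Equiv.Perm (Fin n)),
      (∀ i, 0 < d i) ∧ ∀ i j, A i j = if σ i = j then d i else 0 := by
  obtain ⟨B, hAB, _⟩ := hinv
  have hdiag : ∀ i : Fin n, ∃ k, 0 < A i k ∧ 0 < B k i := by
    intro i
    have h1 : mMul A B i i = 1 := by rw [hAB]; simp [Matrix.one_apply]
    have hpos : (0 : NNReal) < Finset.univ.sup fun k => A i k * B k i := by
      have h2 : (Finset.univ.sup fun k => A i k * B k i) = mMul A B i i := rfl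
      rw [h2, h1]; norm_num
    rw [Finset.lt_sup_iff] at hpos
    obtain ⟨k, _, hk⟩ := hpos
    have ha : A i k ≠ 0 := fun h => by simp [h] at hk
    have hb : B k i ≠ 0 := fun h => by simp [h] at hk
    exact ⟨k, pos_iff_ne_zero.mpr ha, pos_iff_ne_zero.mpr hb⟩
  choose f hfA hfB using hdiag
  have hzero : ∀ i j : Fin n, i ≠ j → ∀ k, A i k * B k j = 0 := by
    intro i j hij k
    have h1 : mMul A B i j = 0 := by rw [hAB]; simp [Matrix.one_apply, hij]
    have h2 : A i k * B k j ≤ mMul A B i j :=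
      Finset.le_sup (f := fun k => A i k * B k j) (Finset.mem_univ k)
    rw [h1] at h2
    exact le_antisymm h2 zero_le
  have hinj : Function.Injective f := by
    intro i i' hii'
    by_contra hne
    rcases mul_eq_zero.mp (hzero i i' hne (f i')) with h | h
    · rw [← hii'] at h; exact absurd h (hfA i).ne'
    · exact absurd h (hfB i').ne'
  have hbij : Function.Bijective f := Finite.injective_iff_bijective.mp hinj
  refine ⟨fun i => A i (f i), Equiv.ofBijective f hbij, fun i => hfA i, fun i j => ?_⟩
  simp only [Equiv.ofBijective_apply]
  by_cases hj : f i = j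
  · subst hj; simp
  · rw [if_neg hj]
    by_contra hA0
    have hApos : 0 < A i j := pos_iff_ne_zero.mpr hA0
    obtain ⟨i', hi'⟩ := hbij.2 j
    have hne : i ≠ i' := fun h => hj (by rw [h, hi'])
    rcases mul_eq_zero.mp (hzero i i' hne j) with h | h
    · exact hA0 h
    · rw [← hi'] at h; exact absurd h (hfB i').ne'
end
end

section
/- Let A, B ∈ M_n(ℝ₊) each be triangularizable over the max algebra. Then A and B are simultaneously triangularizable (some permutation matrix P makes both P⁻¹AP and P⁻¹BP upper triangular) if and only if the digraph G_{A⊕B} of the entrywise maximum has no directed cycle on at least two vertices. -/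
open Matrix Finset

noncomputable section

theorem stmt4 {n : ℕ} (A B : Matrix (Fin n) (Fin n) NNReal)
    (hA : Triangularizable A) (hB : Triangularizable B) :
    SimTriangularizable A B ↔ NoMultiVertexCycle (msup A B) := by
  constructor
  · rintro ⟨σ, hAσ, hBσ⟩ i j hij ⟨hij₁, hij₂⟩
    have step : ∀ a b, Edge (msup A B) a b → σ.symm a ≤ σ.symm b := by
      intro a b hab
      by_contra h
      push_neg at h
      have hA0 := hAσ _ _ h
      have hB0 := hBσ _ _ h
      simp only [conjP, Equiv.apply_symm_apply] at hA0 hB0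
      have h0 : msup A B a b = 0 := by simp [msup, hA0, hB0]
      rw [Edge, h0] at hab
      exact lt_irrefl 0 hab
    have mono : ∀ a b, Relation.TransGen (Edge (msup A B)) a b → σ.symm a ≤ σ.symm b := by
      intro a b h
      induction h with
      | single h => exact step _ _ h
      | tail _ h₂ ih => exact le_trans ih (step _ _ h₂)
    exact hij (σ.symm.injective (le_antisymm (mono _ _ hij₁) (mono _ _ hij₂)))
  · intro hcyc
    classical
    set M := msup A B with hM
    let r : Fin n → Fin n → Prop := fun a b => a = b ∨ (a ≠ b ∧ Relation.TransGen (Edge M) a b)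
    haveI : IsPartialOrder (Fin n) r := by
      refine { refl := fun a => Or.inl rfl, trans := ?_, antisymm := ?_ }
      · rintro a b c (rfl | ⟨hab, h1⟩) h2
        · exact h2
        rcases h2 with rfl | ⟨hbc, h2⟩
        · exact Or.inr ⟨hab, h1⟩
        by_cases hac : a = c
        · subst hac
          exact absurd ⟨h1, h2⟩ (hcyc a b hab)
        · exact Or.inr ⟨hac, h1.trans h2⟩
      · rintro a b (rfl | ⟨hab, h1⟩) h2
        · rfl
        rcases h2 with rfl | ⟨hba, h2⟩
        · rfl
        · exact absurd ⟨h1, h2⟩ (hcyc a b hab)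
    obtain ⟨s, hs, hrs⟩ := extend_partialOrder r
    haveI := hs.toIsPartialOrder.toIsPreorder.toIsTrans
    haveI := hs.toIsPartialOrder.toAntisymm
    haveI := hs.toTotal
    haveI : DecidableRel s := Classical.decRel s
    set l := Finset.sort Finset.univ s with hl
    have hlen : l.length = n := by
      rw [hl, Finset.length_sort, Finset.card_univ, Fintype.card_fin]
    have hnodup : l.Nodup := Finset.sort_nodup Finset.univ s
    have hsorted : l.Pairwise s := Finset.pairwise_sort Finset.univ s
    let f : Fin n → Fin n := fun i => l.get (Fin.cast hlen.symm i)
    have hinj : Function.Injective f := by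
      intro a b hab
      have h1 := List.nodup_iff_injective_get.mp hnodup hab
      exact Fin.cast_injective hlen.symm h1
    let σ : Equiv.Perm (Fin n) := Equiv.ofBijective f (Finite.injective_iff_bijective.mp hinj)
    have key : ∀ i j : Fin n, j < i → M (σ i) (σ j) = 0 := by
      intro i j hji
      by_contra h0
      have hedge : Edge M (σ i) (σ j) := pos_iff_ne_zero.mpr h0
      have hne : σ i ≠ σ j := fun h => (ne_of_gt hji) (σ.injective h)
      have hr : r (σ i) (σ j) := Or.inr ⟨hne, Relation.TransGen.single hedge⟩
      have hs1 : s (σ i) (σ j) := hrs _ _ hr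
      have hs2 : s (σ j) (σ i) := by
        have : (Fin.cast hlen.symm j) < (Fin.cast hlen.symm i) := hji
        exact hsorted.rel_get_of_lt this
      exact hne (antisymm hs1 hs2)
    refine ⟨σ, ?_, ?_⟩ <;> intro i j hji <;> have h0 := key i j hji
    · have : A (σ i) (σ j) ≤ M (σ i) (σ j) := by rw [hM]; exact le_max_left _ _
      rw [h0] at this
      exact le_zero_iff.mp this
    · have : B (σ i) (σ j) ≤ M (σ i) (σ j) := by rw [hM]; exact le_max_right _ _
      rw [h0] at this
      exact le_zero_iff.mp this
end
end

section
/- If A, B ∈ M_n(ℝ₊) are triangularizable matrices over the max algebra and every edge of G_A is an edge of G_B (or vice versa), then A and B are simultaneously triangularizable. -/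
open Matrix Finset

noncomputable section

theorem stmt5 {n : ℕ} (A B : Matrix (Fin n) (Fin n) NNReal)
    (hA : Triangularizable A) (hB : Triangularizable B)
    (hsub : (∀ i j, Edge A i j → Edge B i j) ∨ (∀ i j, Edge B i j → Edge A i j)) :
    SimTriangularizable A B := by
  rcases hsub with h | h
  · obtain ⟨σ, hσ⟩ := hB
    refine ⟨σ, fun i j hij => ?_, hσ⟩
    by_contra hne
    exact absurd (hσ i j hij) (ne_of_gt (h _ _ (pos_iff_ne_zero.mpr hne)))
  · obtain ⟨σ, hσ⟩ := hA
    refine ⟨σ, hσ, fun i j hij => ?_⟩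
    by_contra hne
    exact absurd (hσ i j hij) (ne_of_gt (h _ _ (pos_iff_ne_zero.mpr hne)))
end
end

section
/- Let A, B ∈ M_n(ℝ₊) be nilpotent in the max algebra (so their digraphs are acyclic). If the digraph G_{A⊕B} contains a directed cycle, then the max commutator C = (A⊗B) ⊕ (B⊗A) has some positive entry C_{uw} > 0, where u lies on the cycle. -/
open Matrix Finset

noncomputable section

lemma mMul_pos {n : ℕ} {A B : Matrix (Fin n) (Fin n) NNReal} {i j : Fin n} :
    0 < mMul A B i j ↔ ∃ k, 0 < A i k ∧ 0 < B k j := by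
  simp [mMul, Finset.lt_sup_iff, pos_iff_ne_zero, mul_ne_zero_iff]

lemma mPow_pos_add {n : ℕ} {A : Matrix (Fin n) (Fin n) NNReal} :
    ∀ (a : ℕ) {b : ℕ} {i l j : Fin n}, 0 < mPow A a i l → 0 < mPow A b l j →
      0 < mPow A (a + b) i j := by
  intro a
  induction a with
  | zero =>
    intro b i l j h1 h2
    by_cases hil : i = l
    · subst hil; simpa using h2
    · simp [mPow, Matrix.one_apply, hil] at h1
  | succ a ih =>
    intro b i l j h1 h2
    obtain ⟨k, hk1, hk2⟩ := mMul_pos.mp h1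
    have : 0 < mPow A (a + b) k j := ih hk2 h2
    have heq : a + 1 + b = (a + b) + 1 := by omega
    rw [heq]
    exact mMul_pos.mpr ⟨k, hk1, this⟩

lemma cycle_pow {n : ℕ} {A : Matrix (Fin n) (Fin n) NNReal} {i j : Fin n}
    (h : Relation.TransGen (Edge A) i j) : ∃ m, 0 < m ∧ 0 < mPow A m i j := by
  induction h using Relation.TransGen.head_induction_on with
  | single hxy =>
    refine ⟨1, one_pos, mMul_pos.mpr ⟨j, hxy, ?_⟩⟩
    simp [mPow, Matrix.one_apply]
  | head hab _ ihc =>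
    obtain ⟨m, hm, hp⟩ := ihc
    exact ⟨m + 1, by omega, mMul_pos.mpr ⟨_, hab, hp⟩⟩

lemma mPow_zero_mono {n : ℕ} {A : Matrix (Fin n) (Fin n) NNReal} {k : ℕ}
    (hk : mPow A k = 0) : ∀ j, k ≤ j → mPow A j = 0 := by
  intro j hj
  induction j, hj using Nat.le_induction with
  | base => exact hk
  | succ j hj ih =>
    funext i l
    show mMul A (mPow A j) i l = 0
    refine le_antisymm (Finset.sup_le fun m _ => ?_) zero_le
    simp [ih]

lemma no_cycle {n : ℕ} {A : Matrix (Fin n) (Fin n) NNReal} (hA : MNilpotent A)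
    {i : Fin n} : ¬ Relation.TransGen (Edge A) i i := by
  intro h
  obtain ⟨k, hk⟩ := hA
  obtain ⟨m, hm, hp⟩ := cycle_pow h
  rcases Nat.eq_zero_or_pos k with hk0 | hk0
  · subst hk0
    have := congrFun (congrFun hk i) i
    simp [mPow, Matrix.one_apply] at this
  · have hmt : ∀ t, 0 < t → 0 < mPow A (m * t) i i := by
      intro t ht
      induction t, ht using Nat.le_induction with
      | base => simpa using hp
      | succ t ht ih =>
        have : m * (t + 1) = m + m * t := by ring
        rw [this]
        exact mPow_pos_add m hp ih
    have h1 : 0 < mPow A (m * k) i i := hmt k hk0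
    have h2 : mPow A (m * k) = 0 := mPow_zero_mono hk _ (Nat.le_mul_of_pos_left k hm)
    rw [h2] at h1
    simp at h1

lemma edge_msup_iff {n : ℕ} {A B : Matrix (Fin n) (Fin n) NNReal} {x y : Fin n} :
    Edge (msup A B) x y ↔ 0 < A x y ∨ 0 < B x y := by
  simp [Edge, msup, lt_max_iff]

lemma key_lemma {n : ℕ} (A B : Matrix (Fin n) (Fin n) NNReal) {x y : Fin n}
    (h : Relation.TransGen (Edge (msup A B)) x y) :
    Relation.TransGen (Edge A) x y ∨ Relation.TransGen (Edge B) x y ∨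
    ∃ u, (u = x ∨ (Relation.TransGen (Edge (msup A B)) x u ∧
                   Relation.TransGen (Edge (msup A B)) u y)) ∧
      ∃ w, 0 < msup (mMul A B) (mMul B A) u w := by
  induction h using Relation.TransGen.head_induction_on with
  | single hxy =>
    rcases edge_msup_iff.mp hxy with h | h
    · exact Or.inl (Relation.TransGen.single h)
    · exact Or.inr (Or.inl (Relation.TransGen.single h))
  | @head a c hac hcy ihc =>
    rcases edge_msup_iff.mp hac with hA | hB
    · rcases ihc with hAc | hBc | ⟨u, hu, hw⟩
      · exact Or.inl (Relation.TransGen.head hA hAc)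
      · -- A-edge a→c then B-path from c: first B-edge c→k gives (A⊗B) a k > 0
        obtain ⟨k, hck, -⟩ := Relation.TransGen.head'_iff.mp hBc
        refine Or.inr (Or.inr ⟨a, Or.inl rfl, k, ?_⟩)
        exact lt_max_iff.mpr (Or.inl (mMul_pos.mpr ⟨c, hA, hck⟩))
      · refine Or.inr (Or.inr ⟨u, ?_, hw⟩)
        rcases hu with rfl | ⟨h1, h2⟩
        · exact Or.inr ⟨Relation.TransGen.single hac, hcy⟩
        · exact Or.inr ⟨Relation.TransGen.head hac h1, h2⟩
    · rcases ihc with hAc | hBc | ⟨u, hu, hw⟩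
      · obtain ⟨k, hck, -⟩ := Relation.TransGen.head'_iff.mp hAc
        refine Or.inr (Or.inr ⟨a, Or.inl rfl, k, ?_⟩)
        exact lt_max_iff.mpr (Or.inr (mMul_pos.mpr ⟨c, hB, hck⟩))
      · exact Or.inr (Or.inl (Relation.TransGen.head hB hBc))
      · refine Or.inr (Or.inr ⟨u, ?_, hw⟩)
        rcases hu with rfl | ⟨h1, h2⟩
        · exact Or.inr ⟨Relation.TransGen.single hac, hcy⟩
        · exact Or.inr ⟨Relation.TransGen.head hac h1, h2⟩

theorem stmt8 {n : ℕ} (A B : Matrix (Fin n) (Fin n) NNReal)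
    (hA : MNilpotent A) (hB : MNilpotent B)
    (v : Fin n) (hcyc : Relation.TransGen (Edge (msup A B)) v v) :
    ∃ u w : Fin n,
      (u = v ∨ (Relation.TransGen (Edge (msup A B)) v u ∧
                Relation.TransGen (Edge (msup A B)) u v)) ∧
      0 < msup (mMul A B) (mMul B A) u w := by
  rcases key_lemma A B hcyc with h | h | ⟨u, hu, w, hw⟩
  · exact absurd h (no_cycle hA)
  · exact absurd h (no_cycle hB)
  · exact ⟨u, w, hu, hw⟩
end
end

section
/- Let A, B ∈ M_n(ℝ₊) be nilpotent in the max algebra, and let C = (A⊗B) ⊕ (B⊗A) be their max commutator. If A⊗C = 0 and B⊗C = 0, then A and B are simultaneously triangularizable by a permutation matrix. -/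
open Matrix Finset

noncomputable section

/-! ### Auxiliary lemmas -/

lemma aux_mMul_zero {n : ℕ} (A : Matrix (Fin n) (Fin n) NNReal) : mMul A 0 = 0 := by
  funext i j; simp [mMul]

lemma aux_pos_of_mul {a b : NNReal} (h : 0 < a * b) : 0 < a ∧ 0 < b := by
  rw [pos_iff_ne_zero] at h
  rw [mul_ne_zero_iff] at h
  exact ⟨pos_iff_ne_zero.2 h.1, pos_iff_ne_zero.2 h.2⟩

lemma aux_mPow_zero_mono {n : ℕ} (A : Matrix (Fin n) (Fin n) NNReal) {k m : ℕ}
    (h : mPow A k = 0) (hkm : k ≤ m) : mPow A m = 0 := by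
  obtain ⟨d, rfl⟩ := Nat.exists_eq_add_of_le hkm
  induction d with
  | zero => simpa using h
  | succ d ih =>
      have hle : k ≤ k + d := Nat.le_add_right k d
      have : k + (d + 1) = (k + d) + 1 := by ring
      rw [this]
      show mMul A (mPow A (k + d)) = 0
      rw [ih hle, aux_mMul_zero]

lemma aux_mPow_pos_comp {n : ℕ} (A : Matrix (Fin n) (Fin n) NNReal) :
    ∀ (a : ℕ) {b : ℕ} {i t j : Fin n}, 0 < mPow A a i t → 0 < mPow A b t j →
      0 < mPow A (a + b) i j := by
  intro a
  induction a with
  | zero =>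
      intro b i t j h1 h2
      have : i = t := by
        by_contra hne
        simp [mPow, Matrix.one_apply, hne] at h1
      simpa [this] using h2
  | succ a ih =>
      intro b i t j h1 h2
      have h1' : 0 < Finset.univ.sup fun k => A i k * mPow A a k t := h1
      rw [Finset.lt_sup_iff] at h1'
      obtain ⟨k, -, hk⟩ := h1'
      obtain ⟨hAik, hkt⟩ := aux_pos_of_mul hk
      have hkj : 0 < mPow A (a + b) k j := ih hkt h2
      have : (a + 1) + b = (a + b) + 1 := by ring
      rw [this]
      show 0 < Finset.univ.sup fun l => A i l * mPow A (a + b) l j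
      rw [Finset.lt_sup_iff]
      exact ⟨k, Finset.mem_univ k, mul_pos hAik hkj⟩

lemma aux_edge_pow {n : ℕ} {A : Matrix (Fin n) (Fin n) NNReal} {i j : Fin n}
    (h : Edge A i j) : 0 < mPow A 1 i j := by
  show 0 < Finset.univ.sup fun k => A i k * mPow A 0 k j
  rw [Finset.lt_sup_iff]
  refine ⟨j, Finset.mem_univ j, ?_⟩
  have : mPow A 0 j j = 1 := Matrix.one_apply_eq j
  rw [this, mul_one]
  exact h

lemma aux_transGen_pow {n : ℕ} {A : Matrix (Fin n) (Fin n) NNReal} {i j : Fin n}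
    (h : Relation.TransGen (Edge A) i j) : ∃ ℓ, 1 ≤ ℓ ∧ 0 < mPow A ℓ i j := by
  induction h with
  | single h => exact ⟨1, le_refl 1, aux_edge_pow h⟩
  | tail _ h ih =>
      obtain ⟨ℓ, hℓ, hp⟩ := ih
      exact ⟨ℓ + 1, by omega, aux_mPow_pos_comp A ℓ hp (aux_edge_pow h)⟩

lemma aux_no_loop {n : ℕ} {A : Matrix (Fin n) (Fin n) NNReal} (hA : MNilpotent A)
    (u : Fin n) : ¬ Relation.TransGen (Edge A) u u := by
  intro h
  obtain ⟨k, hk⟩ := hA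
  obtain ⟨ℓ, hℓ, hp⟩ := aux_transGen_pow h
  have hmult : ∀ m : ℕ, 0 < mPow A (ℓ * m) u u := by
    intro m
    induction m with
    | zero => simp [mPow, Matrix.one_apply_eq]
    | succ m ih =>
        have : ℓ * (m + 1) = ℓ * m + ℓ := by ring
        rw [this]
        exact aux_mPow_pos_comp A _ ih hp
  have hz : mPow A (ℓ * k) = 0 :=
    aux_mPow_zero_mono A hk (Nat.le_mul_of_pos_left k hℓ)
  have := hmult k
  rw [hz] at this
  simp at this

lemma aux_edge_msup {n : ℕ} {A B : Matrix (Fin n) (Fin n) NNReal} {i j : Fin n} :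
    Edge (msup A B) i j ↔ Edge A i j ∨ Edge B i j := lt_max_iff

lemma aux_kill {n : ℕ} {A B : Matrix (Fin n) (Fin n) NNReal}
    (hAC : mMul A (msup (mMul A B) (mMul B A)) = 0)
    (hBC : mMul B (msup (mMul A B) (mMul B A)) = 0)
    {w x y z : Fin n} (hwx : Edge (msup A B) w x) (hxy : Edge A x y) (hyz : Edge B y z) :
    False := by
  set C := msup (mMul A B) (mMul B A) with hCdef
  have hAB : 0 < mMul A B x z := by
    show 0 < Finset.univ.sup fun k => A x k * B k z
    rw [Finset.lt_sup_iff]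
    exact ⟨y, Finset.mem_univ y, mul_pos hxy hyz⟩
  have hC : 0 < C x z := lt_of_lt_of_le hAB (le_max_left _ _)
  rcases aux_edge_msup.1 hwx with h | h
  · have : 0 < mMul A C w z := by
      show 0 < Finset.univ.sup fun k => A w k * C k z
      rw [Finset.lt_sup_iff]
      exact ⟨x, Finset.mem_univ x, mul_pos h hC⟩
    rw [hAC] at this
    simp at this
  · have : 0 < mMul B C w z := by
      show 0 < Finset.univ.sup fun k => B w k * C k z
      rw [Finset.lt_sup_iff]
      exact ⟨x, Finset.mem_univ x, mul_pos h hC⟩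
    rw [hBC] at this
    simp at this

lemma aux_pure {n : ℕ} {A B : Matrix (Fin n) (Fin n) NNReal}
    (hAC : mMul A (msup (mMul A B) (mMul B A)) = 0)
    (hBC : mMul B (msup (mMul A B) (mMul B A)) = 0)
    {y q : Fin n} (hwalk : Relation.ReflTransGen (Edge (msup A B)) y q) :
    ∀ {w x : Fin n}, Edge (msup A B) w x → Edge A x y →
      Relation.ReflTransGen (Edge A) y q := by
  induction hwalk using Relation.ReflTransGen.head_induction_on with
  | refl => intro w x _ _; exact Relation.ReflTransGen.refl
  | head hyz hzq ih =>
      rename_i y z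
      intro w x hwx hxy
      have hyzA : Edge A y z := by
        rcases aux_edge_msup.1 hyz with h | h
        · exact h
        · exact absurd (aux_kill hAC hBC hwx hxy h) id
      have hxyM : Edge (msup A B) x y := aux_edge_msup.2 (Or.inl hxy)
      exact Relation.ReflTransGen.head hyzA (ih hxyM hyzA)

lemma aux_msup_comm {n : ℕ} (A B : Matrix (Fin n) (Fin n) NNReal) : msup A B = msup B A := by
  funext i j; exact max_comm _ _

lemma aux_no_cycle {n : ℕ} {A B : Matrix (Fin n) (Fin n) NNReal}
    (hA : MNilpotent A) (hB : MNilpotent B)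
    (hAC : mMul A (msup (mMul A B) (mMul B A)) = 0)
    (hBC : mMul B (msup (mMul A B) (mMul B A)) = 0)
    (u : Fin n) : ¬ Relation.TransGen (Edge (msup A B)) u u := by
  intro h
  obtain ⟨w, hw1, hw2⟩ := (Relation.TransGen.tail'_iff).1 h
  rcases hw1.cases_head with rfl | ⟨y, huy, hyw⟩
  · -- self loop
    rcases aux_edge_msup.1 hw2 with h' | h'
    · exact aux_no_loop hA u (Relation.TransGen.single h')
    · exact aux_no_loop hB u (Relation.TransGen.single h')
  · have hyu : Relation.ReflTransGen (Edge (msup A B)) y u := hyw.tail hw2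
    rcases aux_edge_msup.1 huy with h' | h'
    · have := aux_pure hAC hBC hyu hw2 h'
      exact aux_no_loop hA u (Relation.TransGen.head' h' this)
    · have hAC' : mMul B (msup (mMul B A) (mMul A B)) = 0 := by
        rw [aux_msup_comm]; exact hBC
      have hBC' : mMul A (msup (mMul B A) (mMul A B)) = 0 := by
        rw [aux_msup_comm]; exact hAC
      have hyu' : Relation.ReflTransGen (Edge (msup B A)) y u := by
        rw [aux_msup_comm]; exact hyu
      have hw2' : Edge (msup B A) w u := by rw [aux_msup_comm]; exact hw2
      have := aux_pure hAC' hBC' hyu' hw2' h'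
      exact aux_no_loop hB u (Relation.TransGen.head' h' this)

/-- From an irreflexive-cycle-free edge relation, build a sorting permutation. -/
lemma aux_topo_sort {n : ℕ} (M : Matrix (Fin n) (Fin n) NNReal)
    (hcyc : ∀ u : Fin n, ¬ Relation.TransGen (Edge M) u u) :
    ∃ σ : Equiv.Perm (Fin n), ∀ i j : Fin n, j < i → M (σ i) (σ j) = 0 := by
  classical
  set r : Fin n → Fin n → Prop := fun u v => u = v ∨ Relation.TransGen (Edge M) u v with hr
  haveI : IsRefl (Fin n) r := ⟨fun a => Or.inl rfl⟩
  haveI : IsTrans (Fin n) r := by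
    constructor
    rintro a b c (rfl | hab) (rfl | hbc)
    · exact Or.inl rfl
    · exact Or.inr hbc
    · exact Or.inr hab
    · exact Or.inr (hab.trans hbc)
  haveI : IsAntisymm (Fin n) r := by
    constructor
    rintro a b (rfl | hab) (hba | hba)
    · rfl
    · rfl
    · exact hba.symm
    · exact absurd (hab.trans hba) (hcyc a)
  haveI : IsPreorder (Fin n) r := ⟨⟩
  haveI : IsPartialOrder (Fin n) r := ⟨⟩
  obtain ⟨s, hs, hrs⟩ := extend_partialOrder r
  have hstrans : ∀ {a b c : Fin n}, s a b → s b c → s a c :=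
    fun hab hbc => hs.toIsPartialOrder.toIsPreorder.toIsTrans.trans _ _ _ hab hbc
  have hsantisymm : ∀ {a b : Fin n}, s a b → s b a → a = b :=
    fun hab hba => hs.toIsPartialOrder.toAntisymm.antisymm _ _ hab hba
  have hstotal : ∀ a b : Fin n, s a b ∨ s b a := fun a b => hs.toTotal.total a b
  -- rank function
  have hcard : ∀ v : Fin n, (Finset.univ.filter fun x => s x v ∧ x ≠ v).card < n := by
    intro v
    have hsub : (Finset.univ.filter fun x => s x v ∧ x ≠ v) ⊆ Finset.univ.erase v := by
      intro x hx
      simp only [Finset.mem_filter] at hx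
      exact Finset.mem_erase.2 ⟨hx.2.2, Finset.mem_univ x⟩
    calc (Finset.univ.filter fun x => s x v ∧ x ≠ v).card
        ≤ (Finset.univ.erase v).card := Finset.card_le_card hsub
      _ < Finset.univ.card := Finset.card_erase_lt_of_mem (Finset.mem_univ v)
      _ = n := by simp
  set f : Fin n → Fin n := fun v => ⟨_, hcard v⟩ with hf
  have hmono : ∀ {u v : Fin n}, s u v → u ≠ v → (f u : ℕ) < (f v : ℕ) := by
    intro u v huv hne
    show (Finset.univ.filter fun x => s x u ∧ x ≠ u).card <
      (Finset.univ.filter fun x => s x v ∧ x ≠ v).card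
    have hnotmem : u ∉ (Finset.univ.filter fun x => s x u ∧ x ≠ u) := by
      simp
    have hins : insert u (Finset.univ.filter fun x => s x u ∧ x ≠ u) ⊆
        (Finset.univ.filter fun x => s x v ∧ x ≠ v) := by
      intro x hx
      rcases Finset.mem_insert.1 hx with rfl | hx
      · exact Finset.mem_filter.2 ⟨Finset.mem_univ x, huv, hne⟩
      · simp only [Finset.mem_filter] at hx
        refine Finset.mem_filter.2 ⟨Finset.mem_univ x, hstrans hx.2.1 huv, ?_⟩
        rintro rfl
        exact hne (hsantisymm huv hx.2.1)
    calc (Finset.univ.filter fun x => s x u ∧ x ≠ u).card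
        < (insert u (Finset.univ.filter fun x => s x u ∧ x ≠ u)).card := by
          rw [Finset.card_insert_of_notMem hnotmem]; omega
      _ ≤ (Finset.univ.filter fun x => s x v ∧ x ≠ v).card := Finset.card_le_card hins
  have hinj : Function.Injective f := by
    intro u v huv
    by_contra hne
    rcases hstotal u v with h | h
    · exact absurd huv (by
        have := hmono h hne
        intro hev
        rw [hev] at this
        omega)
    · have := hmono h (Ne.symm hne)
      rw [huv] at this
      omega
  have hbij : Function.Bijective f := Finite.injective_iff_bijective.1 hinj
  set e : Fin n ≃ Fin n := Equiv.ofBijective f hbij with he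
  refine ⟨e.symm, ?_⟩
  intro i j hji
  by_contra hne
  have hpos : 0 < M (e.symm i) (e.symm j) := pos_iff_ne_zero.2 hne
  have hedge : Edge M (e.symm i) (e.symm j) := hpos
  have hneq : e.symm i ≠ e.symm j := by
    intro hh
    exact absurd (e.symm.injective hh) (by omega : i ≠ j)
  have hrel : r (e.symm i) (e.symm j) := Or.inr (Relation.TransGen.single hedge)
  have hsrel : s (e.symm i) (e.symm j) := hrs _ _ hrel
  have : (f (e.symm i) : ℕ) < (f (e.symm j) : ℕ) := hmono hsrel hneq
  have hfi : f (e.symm i) = i := e.apply_symm_apply i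
  have hfj : f (e.symm j) = j := e.apply_symm_apply j
  rw [hfi, hfj] at this
  have : (i : ℕ) < (j : ℕ) := this
  omega

theorem stmt9 {n : ℕ} (A B : Matrix (Fin n) (Fin n) NNReal)
    (hA : MNilpotent A) (hB : MNilpotent B)
    (hAC : mMul A (msup (mMul A B) (mMul B A)) = 0)
    (hBC : mMul B (msup (mMul A B) (mMul B A)) = 0) :
    SimTriangularizable A B := by
  obtain ⟨σ, hσ⟩ := aux_topo_sort (msup A B) (aux_no_cycle hA hB hAC hBC)
  refine ⟨σ, ?_, ?_⟩ <;> intro i j hji <;> have h := hσ i j hji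
  · have hle : A (σ i) (σ j) ≤ msup A B (σ i) (σ j) := le_max_left _ _
    rw [h] at hle
    exact le_antisymm hle zero_le
  · have hle : B (σ i) (σ j) ≤ msup A B (σ i) (σ j) := le_max_right _ _
    rw [h] at hle
    exact le_antisymm hle zero_le
end
end

section
/- Let A, B ∈ M_n(ℝ₊) be triangularizable max-plus projectors (A⊗A = A, B⊗B = B). If the max commutator C = (A⊗B) ⊕ (B⊗A) is nilpotent, then A and B are simultaneously triangularizable by a permutation matrix. -/
open Matrix Finset

noncomputable section

/-! ### Auxiliary abstract graph lemmas -/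

section GraphLemmas

variable {V : Type*}

/-- The "commutator" edge relation: a two-step path using one `ra` edge and one `rb` edge. -/
def ecRel (ra rb : V → V → Prop) : V → V → Prop :=
  fun x y => ∃ k, (ra x k ∧ rb k y) ∨ (rb x k ∧ ra k y)

/-- A (b,a)-pair edge. -/
def gaRel (ra rb : V → V → Prop) : V → V → Prop :=
  fun x y => ∃ k, rb x k ∧ ra k y

theorem gaRel_le_ecRel (ra rb : V → V → Prop) : ∀ x y, gaRel ra rb x y → ecRel ra rb x y :=
  fun _ _ ⟨k, h1, h2⟩ => ⟨k, Or.inr ⟨h1, h2⟩⟩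

theorem ecRel_comm (ra rb : V → V → Prop) (x y : V) : ecRel ra rb x y ↔ ecRel rb ra x y := by
  constructor
  · rintro ⟨k, h | h⟩
    · exact ⟨k, Or.inr h⟩
    · exact ⟨k, Or.inl h⟩
  · rintro ⟨k, h | h⟩
    · exact ⟨k, Or.inr h⟩
    · exact ⟨k, Or.inl h⟩

theorem ecRel_swap (ra rb : V → V → Prop) (x y : V) :
    ecRel (Function.swap ra) (Function.swap rb) x y ↔ ecRel ra rb y x := by
  constructor
  · rintro ⟨k, ⟨h1, h2⟩ | ⟨h1, h2⟩⟩
    · exact ⟨k, Or.inr ⟨h2, h1⟩⟩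
    · exact ⟨k, Or.inl ⟨h2, h1⟩⟩
  · rintro ⟨k, ⟨h1, h2⟩ | ⟨h1, h2⟩⟩
    · exact ⟨k, Or.inr ⟨h2, h1⟩⟩
    · exact ⟨k, Or.inl ⟨h2, h1⟩⟩

/-- Push a trailing `ra`-edge backwards through a chain of commutator edges. -/
theorem pushA {ra rb : V → V → Prop} (ta : Transitive ra) {x k : V}
    (h : Relation.TransGen (ecRel ra rb) x k) :
    ∀ z, ra k z → Relation.TransGen (ecRel ra rb) x z ∨
      ∃ u, ra x u ∧ Relation.TransGen (gaRel ra rb) u z := by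
  induction h with
  | single h1 =>
    intro z hz
    obtain ⟨m, hm | hm⟩ := h1
    · exact Or.inr ⟨m, hm.1, Relation.TransGen.single ⟨_, hm.2, hz⟩⟩
    · exact Or.inl (Relation.TransGen.single ⟨m, Or.inr ⟨hm.1, ta hm.2 hz⟩⟩)
  | tail hxw hwk ih =>
    intro z hz
    obtain ⟨m, hm | hm⟩ := hwk
    · rcases ih m hm.1 with h' | ⟨u, hu1, hu2⟩
      · exact Or.inl (h'.tail ⟨_, Or.inr ⟨hm.2, hz⟩⟩)
      · exact Or.inr ⟨u, hu1, hu2.tail ⟨_, hm.2, hz⟩⟩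
    · exact Or.inl (hxw.tail ⟨m, Or.inr ⟨hm.1, ta hm.2 hz⟩⟩)

theorem absorbGA {ra rb : V → V → Prop} (ta : Transitive ra) {u x : V}
    (h : Relation.TransGen (gaRel ra rb) u x) (hxu : ra x u) :
    ∃ v, Relation.TransGen (gaRel ra rb) v v := by
  cases h with
  | single h1 =>
    obtain ⟨b, hb1, hb2⟩ := h1
    exact ⟨u, Relation.TransGen.single ⟨b, hb1, ta hb2 hxu⟩⟩
  | tail huw hwx =>
    obtain ⟨b, hb1, hb2⟩ := hwx
    exact ⟨u, huw.tail ⟨b, hb1, ta hb2 hxu⟩⟩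

theorem absorbA {ra rb : V → V → Prop} (ta : Transitive ra) {x k : V}
    (h : Relation.TransGen (ecRel ra rb) x k) (hkx : ra k x) :
    ∃ v, Relation.TransGen (ecRel ra rb) v v := by
  rcases pushA ta h x hkx with h' | ⟨u, hu1, hu2⟩
  · exact ⟨x, h'⟩
  · obtain ⟨v, hv⟩ := absorbGA ta hu2 hu1
    exact ⟨v, Relation.TransGen.mono (gaRel_le_ecRel ra rb) _ _ hv⟩

theorem absorbB {ra rb : V → V → Prop} (tb : Transitive rb) {x k : V}
    (h : Relation.TransGen (ecRel ra rb) x k) (hkx : rb k x) :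
    ∃ v, Relation.TransGen (ecRel ra rb) v v := by
  have h' : Relation.TransGen (ecRel rb ra) x k :=
    Relation.TransGen.mono (fun a b hab => (ecRel_comm ra rb a b).1 hab) _ _ h
  obtain ⟨v, hv⟩ := absorbA tb h' hkx
  exact ⟨v, Relation.TransGen.mono (fun a b hab => (ecRel_comm rb ra a b).1 hab) _ _ hv⟩

/-- Normal form with an optional trailing single edge. -/
theorem nfTrail {ra rb : V → V → Prop} (ta : Transitive ra) (tb : Transitive rb) {x y : V}
    (h : Relation.TransGen (fun a b => ra a b ∨ rb a b) x y) :
    ra x y ∨ rb x y ∨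
      ∃ s, Relation.TransGen (ecRel ra rb) x s ∧ (s = y ∨ ra s y ∨ rb s y) := by
  induction h with
  | single h1 =>
    rcases h1 with h1 | h1
    · exact Or.inl h1
    · exact Or.inr (Or.inl h1)
  | tail hxw hwy ih =>
    rcases ih with h1 | h1 | ⟨s, hD, hopt⟩
    · rcases hwy with h2 | h2
      · exact Or.inl (ta h1 h2)
      · exact Or.inr (Or.inr ⟨_, Relation.TransGen.single ⟨_, Or.inl ⟨h1, h2⟩⟩, Or.inl rfl⟩)
    · rcases hwy with h2 | h2
      · exact Or.inr (Or.inr ⟨_, Relation.TransGen.single ⟨_, Or.inr ⟨h1, h2⟩⟩, Or.inl rfl⟩)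
      · exact Or.inr (Or.inl (tb h1 h2))
    · rcases hopt with rfl | h3 | h3
      · exact Or.inr (Or.inr ⟨s, hD, Or.inr hwy⟩)
      · rcases hwy with h2 | h2
        · exact Or.inr (Or.inr ⟨s, hD, Or.inr (Or.inl (ta h3 h2))⟩)
        · exact Or.inr (Or.inr ⟨_, hD.tail ⟨_, Or.inl ⟨h3, h2⟩⟩, Or.inl rfl⟩)
      · rcases hwy with h2 | h2
        · exact Or.inr (Or.inr ⟨_, hD.tail ⟨_, Or.inr ⟨h3, h2⟩⟩, Or.inl rfl⟩)
        · exact Or.inr (Or.inr ⟨s, hD, Or.inr (Or.inr (tb h3 h2))⟩)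

/-- Normal form with an optional leading single edge, via reversal. -/
theorem nfLead {ra rb : V → V → Prop} (ta : Transitive ra) (tb : Transitive rb) {x y : V}
    (h : Relation.TransGen (fun a b => ra a b ∨ rb a b) x y) :
    ra x y ∨ rb x y ∨
      ∃ t, (t = x ∨ ra x t ∨ rb x t) ∧ Relation.TransGen (ecRel ra rb) t y := by
  have ta' : Transitive (Function.swap ra) := fun _ _ _ h1 h2 => ta h2 h1
  have tb' : Transitive (Function.swap rb) := fun _ _ _ h1 h2 => tb h2 h1
  have h' : Relation.TransGen (fun a b => Function.swap ra a b ∨ Function.swap rb a b) y x :=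
    Relation.transGen_swap.mpr h
  rcases nfTrail ta' tb' h' with h1 | h1 | ⟨s, hD, hopt⟩
  · exact Or.inl h1
  · exact Or.inr (Or.inl h1)
  · refine Or.inr (Or.inr ⟨s, ?_, ?_⟩)
    · rcases hopt with rfl | h2 | h2
      · exact Or.inl rfl
      · exact Or.inr (Or.inl h2)
      · exact Or.inr (Or.inr h2)
    · have : Relation.TransGen (Function.swap (ecRel ra rb)) y s :=
        Relation.TransGen.mono (fun a b hab => (ecRel_swap ra rb a b).1 hab) _ _ hD
      exact Relation.transGen_swap.mp this

theorem graphMaster {ra rb : V → V → Prop} (ta : Transitive ra) (tb : Transitive rb)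
    (hnc : ∀ v, ¬ Relation.TransGen (ecRel ra rb) v v) {i j : V}
    (h1 : Relation.TransGen (fun a b => ra a b ∨ rb a b) i j)
    (h2 : Relation.TransGen (fun a b => ra a b ∨ rb a b) j i) :
    (ra i j ∧ ra j i) ∨ (rb i j ∧ rb j i) := by
  have noc : ∀ v, Relation.TransGen (ecRel ra rb) v v → (ra i j ∧ ra j i) ∨ (rb i j ∧ rb j i) :=
    fun v hv => absurd hv (hnc v)
  have noc' : (∃ v, Relation.TransGen (ecRel ra rb) v v) →
      (ra i j ∧ ra j i) ∨ (rb i j ∧ rb j i) := fun ⟨v, hv⟩ => noc v hv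
  rcases nfTrail ta tb h1 with hA | hB | ⟨s, hD, hopt⟩
  · rcases nfLead ta tb h2 with hA' | hB' | ⟨t, hopt2, hD2⟩
    · exact Or.inl ⟨hA, hA'⟩
    · exact noc i (Relation.TransGen.single ⟨j, Or.inl ⟨hA, hB'⟩⟩)
    · rcases hopt2 with rfl | h3 | h3
      · exact noc' (absorbA ta hD2 hA)
      · exact noc' (absorbA ta hD2 (ta hA h3))
      · exact noc t (hD2.tail ⟨j, Or.inl ⟨hA, h3⟩⟩)
  · rcases nfLead ta tb h2 with hA' | hB' | ⟨t, hopt2, hD2⟩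
    · exact noc j (Relation.TransGen.single ⟨i, Or.inl ⟨hA', hB⟩⟩)
    · exact Or.inr ⟨hB, hB'⟩
    · rcases hopt2 with rfl | h3 | h3
      · exact noc' (absorbB tb hD2 hB)
      · exact noc t (hD2.tail ⟨j, Or.inr ⟨hB, h3⟩⟩)
      · exact noc' (absorbB tb hD2 (tb hB h3))
  · rcases nfLead ta tb h2 with hA' | hB' | ⟨t, hopt2, hD2⟩
    · rcases hopt with rfl | h3 | h3
      · exact noc' (absorbA ta hD hA')
      · exact noc' (absorbA ta hD (ta h3 hA'))
      · exact noc i (hD.tail ⟨j, Or.inr ⟨h3, hA'⟩⟩)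
    · rcases hopt with rfl | h3 | h3
      · exact noc' (absorbB tb hD hB')
      · exact noc i (hD.tail ⟨j, Or.inl ⟨h3, hB'⟩⟩)
      · exact noc' (absorbB tb hD (tb h3 hB'))
    · rcases hopt with rfl | h3 | h3 <;> rcases hopt2 with rfl | h4 | h4
      · exact noc i (hD.trans hD2)
      · exact noc' (absorbA ta (hD2.trans hD) h4)
      · exact noc' (absorbB tb (hD2.trans hD) h4)
      · exact noc' (absorbA ta (hD2.trans hD) h3)
      · exact noc' (absorbA ta (hD2.trans hD) (ta h3 h4))
      · exact noc t ((hD2.trans hD).tail ⟨j, Or.inl ⟨h3, h4⟩⟩)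
      · exact noc' (absorbB tb (hD2.trans hD) h3)
      · exact noc t ((hD2.trans hD).tail ⟨j, Or.inr ⟨h3, h4⟩⟩)
      · exact noc' (absorbB tb (hD2.trans hD) (tb h3 h4))

end GraphLemmas

/-! ### Matrix lemmas -/

theorem le_mMul {n : ℕ} (X Y : Matrix (Fin n) (Fin n) NNReal) (i k j : Fin n) :
    X i k * Y k j ≤ mMul X Y i j :=
  Finset.le_sup (f := fun k => X i k * Y k j) (Finset.mem_univ k)

theorem mMul_zero {n : ℕ} (X : Matrix (Fin n) (Fin n) NNReal) : mMul X 0 = 0 := by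
  funext i j
  refine le_antisymm (Finset.sup_le fun k _ => ?_) zero_le
  simp [Matrix.zero_apply]

theorem edge_trans {n : ℕ} {A : Matrix (Fin n) (Fin n) NNReal} (hpA : mMul A A = A) :
    Transitive (Edge A) := by
  intro i k j h1 h2
  have hle : A i k * A k j ≤ A i j := by
    conv_rhs => rw [← hpA]
    exact le_mMul A A i k j
  exact lt_of_lt_of_le (mul_pos h1 h2) hle

theorem edge_msup {n : ℕ} {X Y : Matrix (Fin n) (Fin n) NNReal} {i j : Fin n} :
    Edge (msup X Y) i j ↔ Edge X i j ∨ Edge Y i j := lt_max_iff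

theorem edge_mMul {n : ℕ} {X Y : Matrix (Fin n) (Fin n) NNReal} {i j : Fin n} :
    Edge (mMul X Y) i j ↔ ∃ k, Edge X i k ∧ Edge Y k j := by
  constructor
  · intro h
    obtain ⟨k, -, hk⟩ := Finset.lt_sup_iff.1 h
    refine ⟨k, ?_, ?_⟩
    · exact pos_iff_ne_zero.2 fun h0 => by simp [h0] at hk
    · exact pos_iff_ne_zero.2 fun h0 => by simp [h0] at hk
  · rintro ⟨k, h1, h2⟩
    exact Finset.lt_sup_iff.2 ⟨k, Finset.mem_univ k, mul_pos h1 h2⟩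

theorem edge_C_iff {n : ℕ} {A B : Matrix (Fin n) (Fin n) NNReal} {i j : Fin n} :
    Edge (msup (mMul A B) (mMul B A)) i j ↔ ecRel (Edge A) (Edge B) i j := by
  rw [edge_msup]
  constructor
  · rintro (h | h)
    · obtain ⟨k, h1, h2⟩ := edge_mMul.1 h; exact ⟨k, Or.inl ⟨h1, h2⟩⟩
    · obtain ⟨k, h1, h2⟩ := edge_mMul.1 h; exact ⟨k, Or.inr ⟨h1, h2⟩⟩
  · rintro ⟨k, ⟨h1, h2⟩ | ⟨h1, h2⟩⟩
    · exact Or.inl (edge_mMul.2 ⟨k, h1, h2⟩)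
    · exact Or.inr (edge_mMul.2 ⟨k, h1, h2⟩)

theorem mPow_zero_add {n : ℕ} {C : Matrix (Fin n) (Fin n) NNReal} {k : ℕ}
    (h : mPow C k = 0) : ∀ s, mPow C (k + s) = 0 := by
  intro s
  induction s with
  | zero => simpa using h
  | succ s ih =>
    show mMul C (mPow C (k + s)) = 0
    rw [ih, mMul_zero]

theorem pos_of_transGen {n : ℕ} {C : Matrix (Fin n) (Fin n) NNReal} {v w : Fin n}
    (h : Relation.TransGen (Edge C) v w) : ∃ m, 0 < m ∧ 0 < mPow C m v w := by
  induction h using Relation.TransGen.head_induction_on with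
  | single h1 =>
    refine ⟨1, Nat.one_pos, lt_of_lt_of_le ?_ (le_mMul C (mPow C 0) _ w w)⟩
    have : mPow C 0 w w = 1 := Matrix.one_apply_eq w
    rw [this, mul_one]
    exact h1
  | head h' h ihh =>
    obtain ⟨m, hm, hpos⟩ := ihh
    exact ⟨m + 1, Nat.succ_pos m, lt_of_lt_of_le (mul_pos h' hpos) (le_mMul C (mPow C m) _ _ w)⟩

theorem mPow_superadd {n : ℕ} (C : Matrix (Fin n) (Fin n) NNReal) :
    ∀ (a : ℕ) (b : ℕ) (v u w : Fin n), mPow C a v u * mPow C b u w ≤ mPow C (a + b) v w := by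
  intro a
  induction a with
  | zero =>
    intro b v u w
    by_cases hvu : v = u
    · subst hvu
      have : mPow C 0 v v = 1 := Matrix.one_apply_eq v
      rw [this, one_mul]
      simp only [Nat.zero_add]; exact le_refl _
    · have : mPow C 0 v u = 0 := Matrix.one_apply_ne hvu
      rw [this, zero_mul]
      exact zero_le
  | succ a ih =>
    intro b v u w
    obtain ⟨k0, -, hk0⟩ := Finset.exists_mem_eq_sup Finset.univ ⟨v, Finset.mem_univ v⟩
      (fun k => C v k * mPow C a k u)
    have e1 : mPow C (a + 1) v u = C v k0 * mPow C a k0 u := hk0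
    have harith : a + 1 + b = (a + b) + 1 := by omega
    rw [harith]
    calc mPow C (a + 1) v u * mPow C b u w
        = C v k0 * (mPow C a k0 u * mPow C b u w) := by rw [e1, mul_assoc]
      _ ≤ C v k0 * mPow C (a + b) k0 w := mul_le_mul_right (ih b k0 u w) _
      _ ≤ mPow C ((a + b) + 1) v w := le_mMul C (mPow C (a + b)) v k0 w

theorem no_cycle_of_nilpotent {n : ℕ} {C : Matrix (Fin n) (Fin n) NNReal}
    (hnil : MNilpotent C) {v : Fin n} (h : Relation.TransGen (Edge C) v v) : False := by
  obtain ⟨m, hm, hpos⟩ := pos_of_transGen h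
  obtain ⟨N, hN⟩ := hnil
  have key : ∀ t, 0 < mPow C ((t + 1) * m) v v := by
    intro t
    induction t with
    | zero => simpa using hpos
    | succ t iht =>
      have hle := mPow_superadd C ((t + 1) * m) m v v v
      have h2 : (0 : NNReal) < mPow C ((t + 1) * m + m) v v :=
        lt_of_lt_of_le (mul_pos iht hpos) hle
      have e : (t + 1 + 1) * m = (t + 1) * m + m := by ring
      rw [e]
      exact h2
  have hle : N ≤ (N + 1) * m := le_trans (Nat.le_succ N) (Nat.le_mul_of_pos_right _ hm)
  obtain ⟨s, hs⟩ := Nat.le.dest hle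
  have hzero : mPow C ((N + 1) * m) = 0 := by rw [← hs]; exact mPow_zero_add hN s
  have := key N
  rw [hzero] at this
  simp at this

theorem tri_no_two_cycle {n : ℕ} {A : Matrix (Fin n) (Fin n) NNReal}
    (hA : Triangularizable A) {i j : Fin n} (hij : i ≠ j)
    (h1 : Edge A i j) (h2 : Edge A j i) : False := by
  obtain ⟨σ, hσ⟩ := hA
  have key : ∀ x y, Edge A x y → σ.symm x ≤ σ.symm y := by
    intro x y h
    by_contra hlt
    push_neg at hlt
    have h0 := hσ (σ.symm x) (σ.symm y) hlt
    simp only [conjP, Equiv.apply_symm_apply] at h0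
    have h' : 0 < A x y := h
    rw [h0] at h'
    exact lt_irrefl 0 h'
  exact hij (σ.symm.injective (le_antisymm (key i j h1) (key j i h2)))

theorem exists_tri_of_noCycle {n : ℕ} (M : Matrix (Fin n) (Fin n) NNReal)
    (h : NoMultiVertexCycle M) : ∃ σ : Equiv.Perm (Fin n), UpperTri (conjP σ M) := by
  classical
  set r : Fin n → ℕ := fun x =>
    (Finset.univ.filter fun y => y = x ∨ (y ≠ x ∧ Relation.TransGen (Edge M) y x)).card with hrdef
  have hrank : ∀ x y, x ≠ y → Edge M x y → r x < r y := by
    intro x y hxy hedge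
    apply Finset.card_lt_card
    rw [Finset.ssubset_def]
    constructor
    · intro z hz
      simp only [Finset.mem_filter, Finset.mem_univ, true_and] at hz ⊢
      rcases hz with rfl | ⟨hzx, hzT⟩
      · exact Or.inr ⟨hxy, Relation.TransGen.single hedge⟩
      · refine Or.inr ⟨?_, hzT.tail hedge⟩
        rintro rfl
        exact h x z hxy ⟨Relation.TransGen.single hedge, hzT⟩
    · intro hcon
      have hy : y ∈ Finset.univ.filter
          fun z => z = y ∨ (z ≠ y ∧ Relation.TransGen (Edge M) z y) := by
        simp
      have hy' := hcon hy
      simp only [Finset.mem_filter, Finset.mem_univ, true_and] at hy'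
      rcases hy' with rfl | ⟨-, hT⟩
      · exact hxy rfl
      · exact h x y hxy ⟨Relation.TransGen.single hedge, hT⟩
  refine ⟨Tuple.sort r, ?_⟩
  intro i j hji
  by_contra h0
  have hedge : Edge M (Tuple.sort r i) (Tuple.sort r j) := pos_iff_ne_zero.2 h0
  have hne : Tuple.sort r i ≠ Tuple.sort r j :=
    fun e => (ne_of_gt hji) ((Tuple.sort r).injective e)
  have hlt := hrank _ _ hne hedge
  have hmono : r (Tuple.sort r j) ≤ r (Tuple.sort r i) :=
    Tuple.monotone_sort r (le_of_lt hji)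
  exact lt_irrefl _ (lt_of_lt_of_le hlt hmono)

theorem stmt12 {n : ℕ} (A B : Matrix (Fin n) (Fin n) NNReal)
    (hA : Triangularizable A) (hB : Triangularizable B)
    (hpA : mMul A A = A) (hpB : mMul B B = B)
    (hnil : MNilpotent (msup (mMul A B) (mMul B A))) :
    SimTriangularizable A B := by
  have ta := edge_trans hpA
  have tb := edge_trans hpB
  have hnc : ∀ v, ¬ Relation.TransGen (ecRel (Edge A) (Edge B)) v v := by
    intro v hv
    exact no_cycle_of_nilpotent hnil
      (Relation.TransGen.mono (fun a b hab => edge_C_iff.2 hab) _ _ hv)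
  have hM : NoMultiVertexCycle (msup A B) := by
    intro i j hij hcyc
    obtain ⟨h1, h2⟩ := hcyc
    have h1' := Relation.TransGen.mono (p := fun a b => Edge A a b ∨ Edge B a b) (fun a b hab => edge_msup.1 hab) _ _ h1
    have h2' := Relation.TransGen.mono (p := fun a b => Edge A a b ∨ Edge B a b) (fun a b hab => edge_msup.1 hab) _ _ h2
    rcases graphMaster ta tb hnc h1' h2' with ⟨e1, e2⟩ | ⟨e1, e2⟩
    · exact tri_no_two_cycle hA hij e1 e2
    · exact tri_no_two_cycle hB hij e1 e2
  obtain ⟨σ, hσ⟩ := exists_tri_of_noCycle _ hM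
  refine ⟨σ, ?_, ?_⟩
  · intro i j hji
    have h' : max (A (σ i) (σ j)) (B (σ i) (σ j)) = 0 := hσ i j hji
    exact le_antisymm ((le_max_left _ _).trans h'.le) zero_le
  · intro i j hji
    have h' : max (A (σ i) (σ j)) (B (σ i) (σ j)) = 0 := hσ i j hji
    exact le_antisymm ((le_max_right _ _).trans h'.le) zero_le
end
end

section
/- If A, B ∈ M_n(ℝ₊) are simultaneously triangularizable over the max algebra via a permutation matrix P, then their characteristic polynomial P_{A,B}(z₁,z₂) = tdet(I ⊕ z₁A ⊕ z₂B) equals the product over i of (1 ⊕ a'_{ii}z₁ ⊕ b'_{ii}z₂), where a'_{ii}, b'_{ii} are the diagonal entries of P⁻¹AP, P⁻¹BP; in particular P_{A,B} is a product of n linear factors. -/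
open Matrix Finset

noncomputable section

lemma tdet_conj {n : ℕ} (σ : Equiv.Perm (Fin n)) (M : Matrix (Fin n) (Fin n) NNReal) :
    tdet (conjP σ M) = tdet M := by
  unfold tdet conjP
  apply le_antisymm
  · apply Finset.sup_le
    intro τ _
    have h : ∏ i, M (σ i) (σ (τ i))
        = ∏ i, M i ((σ * τ * σ⁻¹ : Equiv.Perm (Fin n)) i) := by
      rw [← Equiv.prod_comp σ (fun i => M i ((σ * τ * σ⁻¹ : Equiv.Perm (Fin n)) i))]
      simp [Equiv.Perm.mul_apply]
    rw [h]
    exact Finset.le_sup (f := fun τ' : Equiv.Perm (Fin n) => ∏ i, M i (τ' i))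
      (Finset.mem_univ _)
  · apply Finset.sup_le
    intro τ _
    have h : ∏ i, M i (τ i)
        = ∏ i, M (σ i) (σ ((σ⁻¹ * τ * σ : Equiv.Perm (Fin n)) i)) := by
      rw [← Equiv.prod_comp σ (fun i => M i (τ i))]
      simp [Equiv.Perm.mul_apply]
    rw [h]
    exact Finset.le_sup (f := fun τ' : Equiv.Perm (Fin n) => ∏ i, M (σ i) (σ (τ' i)))
      (Finset.mem_univ _)

lemma perm_eq_one_of_le {n : ℕ} (τ : Equiv.Perm (Fin n)) (h : ∀ i, i ≤ τ i) : τ = 1 := by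
  by_contra hne
  have ⟨i, hi⟩ : ∃ i, τ i ≠ i := by
    by_contra hc
    push_neg at hc
    exact hne (Equiv.ext hc)
  have hsum : ∑ j : Fin n, (j : ℕ) = ∑ j : Fin n, ((τ j : Fin n) : ℕ) :=
    (Equiv.sum_comp τ (fun j : Fin n => (j : ℕ))).symm
  have hlt : ∑ j : Fin n, (j : ℕ) < ∑ j : Fin n, ((τ j : Fin n) : ℕ) := by
    apply Finset.sum_lt_sum (fun j _ => by exact_mod_cast h j)
    exact ⟨i, Finset.mem_univ i, by
      have := lt_of_le_of_ne (h i) (Ne.symm hi)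
      exact_mod_cast this⟩
  omega

lemma tdet_upperTri {n : ℕ} (N : Matrix (Fin n) (Fin n) NNReal) (h : UpperTri N) :
    tdet N = ∏ i, N i i := by
  unfold tdet
  apply le_antisymm
  · apply Finset.sup_le
    intro τ _
    by_cases hτ : ∃ i, τ i < i
    · obtain ⟨i, hi⟩ := hτ
      have : ∏ j, N j (τ j) = 0 :=
        Finset.prod_eq_zero (Finset.mem_univ i) (h i (τ i) hi)
      simp [this]
    · push_neg at hτ
      have : τ = 1 := perm_eq_one_of_le τ hτ
      subst this
      simp
  · have := Finset.le_sup (f := fun τ : Equiv.Perm (Fin n) => ∏ i, N i (τ i))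
      (Finset.mem_univ (1 : Equiv.Perm (Fin n)))
    simpa using this

theorem stmt14 {n : ℕ} (A B : Matrix (Fin n) (Fin n) NNReal)
    (σ : Equiv.Perm (Fin n))
    (hA : UpperTri (conjP σ A)) (hB : UpperTri (conjP σ B)) :
    ∀ z₁ z₂ : NNReal,
      tdet (Mz A B z₁ z₂) =
        ∏ i, max (max 1 (conjP σ A i i * z₁)) (conjP σ B i i * z₂) := by
  intro z₁ z₂
  rw [← tdet_conj σ (Mz A B z₁ z₂)]
  have htri : UpperTri (conjP σ (Mz A B z₁ z₂)) := by
    intro i j hji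
    have hne : σ i ≠ σ j := fun h => hji.ne' (σ.injective h)
    have h1 : (1 : Matrix (Fin n) (Fin n) NNReal) (σ i) (σ j) = 0 :=
      Matrix.one_apply_ne hne
    have hA' : A (σ i) (σ j) = 0 := hA i j hji
    have hB' : B (σ i) (σ j) = 0 := hB i j hji
    simp [conjP, Mz, h1, hA', hB']
  rw [tdet_upperTri _ htri]
  apply Finset.prod_congr rfl
  intro i _
  simp [conjP, Mz, Matrix.one_apply_eq, mul_comm]
end
end
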